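/- For 0 < α < 1 and 0 < θ ≤ π, the series ∑_{k=0}^{∞} (−1)^k C(α,k) sin(kθ) converges absolutely to 2^α · sin^α(θ/2) · sin(α(θ − π)/2). -/

import Mathlib

open Real

/-- Generalized binomial coefficient `C(α, k) = α(α−1)⋯(α−k+1)/k!` for real `α`. -/
noncomputable def genBinom (α : ℝ) (k : ℕ) : ℝ :=
  (∏ i ∈ Finset.range k, (α - i)) / (Nat.factorial k)

lemma genBinom_zero (α : ℝ) : genBinom α 0 = 1 := by simp [genBinom]

lemma genBinom_succ (α : ℝ) (k : ℕ) :
    genBinom α (k + 1) = genBinom α k * ((α - k) / (k + 1)) := by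
  rw [genBinom, genBinom, Finset.prod_range_succ, Nat.factorial_succ]
  push_cast
  rw [div_mul_div_comm]
  ring

lemma genBinom_bound {α : ℝ} (h0 : 0 < α) (h1 : α < 1) :
    ∀ k : ℕ, 1 ≤ k → |genBinom α k| ≤ α * ((k : ℝ) ^ (1 + α))⁻¹ := by
  intro k hk
  induction k, hk using Nat.le_induction with
  | base =>
    simp [genBinom, Real.one_rpow, abs_of_pos h0]
  | succ k hk ih =>
    have hk1 : (1:ℝ) ≤ (k:ℝ) := by exact_mod_cast hk
    have hkpos : (0:ℝ) < k := by linarith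
    have hk1pos : (0:ℝ) < (k:ℝ) + 1 := by linarith
    have hbern : (((k:ℝ)+1)/k) ^ α ≤ 1 + α * (1/k) := by
      calc (((k:ℝ)+1)/k) ^ α = (1 + 1/(k:ℝ)) ^ α := by
            rw [add_div, div_self hkpos.ne']
        _ ≤ 1 + α * (1/k) :=
            rpow_one_add_le_one_add_mul_self (le_trans (by norm_num) (by positivity : (0:ℝ) ≤ 1/(k:ℝ))) h0.le h1.le
    have hA : (0:ℝ) < (k:ℝ) ^ α := rpow_pos_of_pos hkpos _
    have hB : (0:ℝ) < ((k:ℝ)+1) ^ α := rpow_pos_of_pos hk1pos _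
    have hdiv : (((k:ℝ)+1)/k) ^ α = ((k:ℝ)+1)^α / (k:ℝ)^α :=
      Real.div_rpow hk1pos.le hkpos.le α
    have hkey : ((k:ℝ) - α) * ((k:ℝ)+1)^α ≤ (k:ℝ) * (k:ℝ)^α := by
      have h2 : ((k:ℝ)+1)^α ≤ (k:ℝ)^α * (1 + α/k) := by
        rw [hdiv, div_le_iff₀ hA] at hbern
        calc ((k:ℝ)+1)^α ≤ (1 + α * (1/k)) * (k:ℝ)^α := hbern
          _ = (k:ℝ)^α * (1 + α/k) := by ring
      have hnn : (0:ℝ) ≤ (k:ℝ) - α := by linarith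
      calc ((k:ℝ) - α) * ((k:ℝ)+1)^α ≤ ((k:ℝ) - α) * ((k:ℝ)^α * (1 + α/k)) :=
            mul_le_mul_of_nonneg_left h2 hnn
        _ = (k:ℝ)^α * ((((k:ℝ)^2 - α^2)) / k) := by field_simp; ring
        _ ≤ (k:ℝ)^α * k := by
            apply mul_le_mul_of_nonneg_left _ hA.le
            rw [div_le_iff₀ hkpos]
            nlinarith
        _ = (k:ℝ) * (k:ℝ)^α := by ring
    have habs : |genBinom α (k+1)| = |genBinom α k| * (((k:ℝ) - α) / (k + 1)) := by
      rw [genBinom_succ, abs_mul, abs_div, abs_of_pos hk1pos,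
        abs_of_neg (by linarith : α - (k:ℝ) < 0)]
      ring_nf
    rw [habs]
    push_cast
    have hr1 : ((k:ℝ)+1) ^ (1+α) = ((k:ℝ)+1) * ((k:ℝ)+1)^α := by
      rw [Real.rpow_add hk1pos, Real.rpow_one]
    have hr2 : (k:ℝ) ^ (1+α) = (k:ℝ) * (k:ℝ)^α := by
      rw [Real.rpow_add hkpos, Real.rpow_one]
    have hfrac : ((k:ℝ) ^ (1+α))⁻¹ * (((k:ℝ) - α) / ((k:ℝ) + 1)) ≤ (((k:ℝ)+1) ^ (1+α))⁻¹ := by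
      rw [hr1, hr2, inv_eq_one_div, inv_eq_one_div, div_mul_div_comm, one_mul,
        div_le_div_iff₀ (by positivity) (by positivity)]
      nlinarith [hkey, hk1pos, hB]
    calc |genBinom α k| * (((k:ℝ) - α) / (k + 1))
        ≤ α * ((k:ℝ) ^ (1+α))⁻¹ * (((k:ℝ) - α) / (k + 1)) := by
          exact mul_le_mul_of_nonneg_right ih
            (div_nonneg (by linarith) (by positivity))
      _ = α * ((k:ℝ) ^ (1+α))⁻¹ * (((k:ℝ) - α) / ((k:ℝ) + 1)) := rfl
      _ ≤ α * (((k:ℝ)+1) ^ (1+α))⁻¹ := by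
          rw [mul_assoc]
          exact mul_le_mul_of_nonneg_left hfrac h0.le

lemma genBinom_le_one {α : ℝ} (h0 : 0 < α) (h1 : α < 1) (k : ℕ) :
    |genBinom α k| ≤ 1 := by
  rcases Nat.eq_zero_or_pos k with rfl | hk
  · simp [genBinom_zero]
  · have h := genBinom_bound h0 h1 k hk
    have hk1 : (1:ℝ) ≤ (k:ℝ) := by exact_mod_cast hk
    have : (1:ℝ) ≤ (k:ℝ) ^ (1+α) := Real.one_le_rpow hk1 (by linarith)
    have hinv : ((k:ℝ) ^ (1+α))⁻¹ ≤ 1 := by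
      rw [inv_le_one_iff₀]; right; exact this
    nlinarith

lemma genBinom_summable {α : ℝ} (h0 : 0 < α) (h1 : α < 1) :
    Summable fun k : ℕ => |genBinom α k| := by
  rw [← summable_nat_add_iff 1]
  have hs : Summable fun k : ℕ => α * (((k+1 : ℕ):ℝ) ^ (1+α))⁻¹ := by
    apply Summable.mul_left
    exact ((Real.summable_nat_rpow_inv).2 (by linarith)).comp_injective
      (add_left_injective 1)
  exact Summable.of_nonneg_of_le (fun k => abs_nonneg _)
    (fun k => genBinom_bound h0 h1 (k+1) k.succ_pos) hs

open Complex in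
lemma binomial_series {α : ℝ} (h0 : 0 < α) (h1 : α < 1) {z : ℂ} (hz : ‖z‖ < 1) :
    ∑' k : ℕ, (genBinom α k : ℂ) * z ^ k = (1 + z) ^ (α : ℂ) := by
  set a : ℕ → ℂ := fun k => (genBinom α k : ℂ) with ha
  have hna : ∀ k, ‖a k‖ = |genBinom α k| := fun k => Complex.norm_real _
  have hna1 : ∀ k, ‖a k‖ ≤ 1 := fun k => (hna k).le.trans (genBinom_le_one h0 h1 k)
  set ρ : ℝ := (1 + ‖z‖) / 2 with hρ
  have hρ0 : 0 < ρ := by positivity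
  have hρ1 : ρ < 1 := by rw [hρ]; linarith
  have hzρ : ‖z‖ < ρ := by rw [hρ]; linarith
  set S : ℂ → ℂ := fun w => ∑' k : ℕ, a k * w ^ k with hS
  set T : ℂ → ℂ := fun w => ∑' k : ℕ, a k * ((k : ℂ) * w ^ (k - 1)) with hT
  set u : ℕ → ℝ := fun k => (k : ℝ) * ρ ^ (k - 1) with hu
  have hus : Summable u := by
    rw [← summable_nat_add_iff 1]
    have h1' : Summable fun k : ℕ => ((k:ℝ)) * ρ ^ k :=
      summable_pow_mul_geometric_of_norm_lt_one 1 (by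
        rw [Real.norm_eq_abs, abs_of_pos hρ0]; exact hρ1) |>.congr (by simp)
    have h2' : Summable fun k : ℕ => ρ ^ k :=
      summable_geometric_of_lt_one hρ0.le hρ1
    apply (h1'.add h2').congr
    intro k
    simp only [hu]
    rw [Nat.add_sub_cancel]
    push_cast
    ring
  have hderiv : ∀ k : ℕ, ∀ w : ℂ, HasDerivAt (fun w => a k * w ^ k)
      (a k * ((k : ℂ) * w ^ (k - 1))) w :=
    fun k w => (hasDerivAt_pow k w).const_mul (a k)
  have hbound : ∀ k : ℕ, ∀ w : ℂ, w ∈ Metric.ball (0:ℂ) ρ →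
      ‖a k * ((k : ℂ) * w ^ (k - 1))‖ ≤ u k := by
    intro k w hw
    rw [mem_ball_zero_iff] at hw
    rw [norm_mul, norm_mul, norm_pow, Complex.norm_natCast]
    calc ‖a k‖ * ((k:ℝ) * ‖w‖ ^ (k-1)) ≤ 1 * ((k:ℝ) * ρ ^ (k-1)) := by
          apply mul_le_mul (hna1 k) _ (by positivity) zero_le_one
          exact mul_le_mul_of_nonneg_left
            (pow_le_pow_left₀ (norm_nonneg w) hw.le _) (Nat.cast_nonneg k)
      _ = u k := by rw [one_mul]
  have hsummand : ∀ w : ℂ, ‖w‖ ≤ 1 → Summable fun k => a k * w ^ k := by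
    intro w hw
    apply Summable.of_norm_bounded (genBinom_summable h0 h1)
    intro k
    rw [norm_mul, norm_pow, ← hna k]
    calc ‖a k‖ * ‖w‖ ^ k ≤ ‖a k‖ * 1 :=
          mul_le_mul_of_nonneg_left (pow_le_one₀ (norm_nonneg w) hw) (norm_nonneg _)
      _ = ‖a k‖ := mul_one _
  have hmem0 : (0:ℂ) ∈ Metric.ball (0:ℂ) ρ := Metric.mem_ball_self hρ0
  have hSderiv : ∀ w ∈ Metric.ball (0:ℂ) ρ, HasDerivAt S (T w) w := by
    intro w hw
    exact hasDerivAt_tsum_of_isPreconnected hus Metric.isOpen_ball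
      (convex_ball (0:ℂ) ρ).isPreconnected (fun k y _ => hderiv k y) hbound hmem0
      (hsummand 0 (by simp)) hw
  have hsg' : ∀ w : ℂ, ‖w‖ < ρ → Summable fun k => a k * ((k:ℂ) * w ^ (k-1)) := by
    intro w hw
    exact Summable.of_norm_bounded hus
      (fun k => hbound k w (by rwa [mem_ball_zero_iff]))
  -- recurrence in ℂ
  have hrec : ∀ k : ℕ, a (k+1) * ((k:ℂ)+1) = a k * ((α:ℂ) - k) := by
    intro k
    have : genBinom α (k+1) * ((k:ℝ)+1) = genBinom α k * (α - k) := by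
      rw [genBinom_succ]
      field_simp
    have h2 := congrArg (Complex.ofReal) this
    push_cast at h2
    simp only [ha]
    exact h2
  have hpow : ∀ (k : ℕ) (w : ℂ), w * ((k:ℂ) * w ^ (k-1)) = (k:ℂ) * w ^ k := by
    intro k w
    cases k with
    | zero => simp
    | succ n => rw [Nat.succ_sub_one]; push_cast; ring
  have hTS : ∀ w : ℂ, ‖w‖ < ρ → (1 + w) * T w = (α:ℂ) * S w := by
    intro w hw
    have hw1 : ‖w‖ ≤ 1 := hw.le.trans hρ1.le
    have hsg'w := hsg' w hw
    have hA : Summable fun k => a (k+1) * (((k:ℂ)+1) * w ^ k) := by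
      apply ((summable_nat_add_iff 1).2 hsg'w).congr
      intro k
      rw [Nat.succ_sub_one]
      push_cast
      ring
    have hB : Summable fun k : ℕ => (k:ℂ) * (a k * w ^ k) := by
      apply (hsg'w.mul_left w).congr
      intro k
      rw [← mul_assoc, mul_comm w (a k), mul_assoc, hpow]
      ring
    have eT : T w = ∑' k : ℕ, a (k+1) * (((k:ℂ)+1) * w ^ k) := by
      simp only [hT]
      rw [Summable.tsum_eq_zero_add hsg'w]
      simp only [Nat.cast_zero, zero_mul, mul_zero, zero_add, Nat.succ_sub_one]
      apply tsum_congr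
      intro k
      push_cast
      ring
    have ewT : w * T w = ∑' k : ℕ, (k:ℂ) * (a k * w ^ k) := by
      simp only [hT]
      rw [← tsum_mul_left]
      apply tsum_congr
      intro k
      rw [← mul_assoc, mul_comm w (a k), mul_assoc, hpow]
      ring
    calc (1 + w) * T w = T w + w * T w := by ring
      _ = ∑' k : ℕ, (a (k+1) * (((k:ℂ)+1) * w ^ k) + (k:ℂ) * (a k * w ^ k)) := by
          rw [ewT, eT, ← Summable.tsum_add hA hB]
      _ = ∑' k : ℕ, (α:ℂ) * (a k * w ^ k) := by
          apply tsum_congr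
          intro k
          have := hrec k
          linear_combination w ^ k * this
      _ = (α:ℂ) * S w := by simp only [hS]; rw [tsum_mul_left]
  -- the quotient is constant on the ball
  have hslit : ∀ w : ℂ, ‖w‖ < ρ → (1 + w) ∈ Complex.slitPlane := by
    intro w hw
    rw [Complex.mem_slitPlane_iff]
    left
    have : |w.re| ≤ ‖w‖ := Complex.abs_re_le_norm w
    have : w.re > -1 := by
      have := neg_abs_le w.re
      nlinarith [hw.trans hρ1]
    simpa using by linarith
  have hne : ∀ w : ℂ, ‖w‖ < ρ → (1 + w) ≠ 0 :=
    fun w hw => Complex.slitPlane_ne_zero (hslit w hw)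
  set h : ℂ → ℂ := fun w => S w * (1 + w) ^ (-(α:ℂ)) with hh
  have hd : ∀ w ∈ Metric.ball (0:ℂ) ρ, HasDerivAt h 0 w := by
    intro w hw
    have hw' : ‖w‖ < ρ := by rwa [mem_ball_zero_iff] at hw
    have d2 : HasDerivAt (fun w : ℂ => (1 + w) ^ (-(α:ℂ)))
        (-(α:ℂ) * (1 + w) ^ (-(α:ℂ) - 1) * 1) w :=
      HasDerivAt.cpow_const ((hasDerivAt_id w).const_add 1) (hslit w hw')
    have dprod := (hSderiv w hw).mul d2
    have e1 : (1 + w) ^ (-(α:ℂ)) = (1 + w) ^ (-(α:ℂ) - 1) * (1 + w) := by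
      conv_lhs => rw [show -(α:ℂ) = (-(α:ℂ) - 1) + 1 by ring]
      rw [Complex.cpow_add _ _ (hne w hw'), Complex.cpow_one]
    have e0 : T w * (1 + w) ^ (-(α:ℂ)) + S w * (-(α:ℂ) * (1 + w) ^ (-(α:ℂ) - 1) * 1) = 0 := by
      rw [e1]
      linear_combination (1 + w) ^ (-(α:ℂ) - 1) * hTS w hw'
    rw [← e0]
    exact dprod
  have hconst : h z = h 0 := by
    apply (convex_ball (0:ℂ) ρ).is_const_of_fderivWithin_eq_zero
      (f := h) (fun w hw => (hd w hw).differentiableAt.differentiableWithinAt)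
      _ (by rwa [mem_ball_zero_iff]) hmem0
    intro x hx
    rw [fderivWithin_of_isOpen Metric.isOpen_ball hx]
    have := (hd x hx).hasFDerivAt.fderiv
    rw [this]
    ext
    simp
  have hS0 : S 0 = 1 := by
    simp only [hS]
    rw [tsum_eq_single 0 (by intro k hk; simp [zero_pow hk])]
    simp [ha, genBinom_zero]
  have hh0 : h 0 = 1 := by
    simp only [hh, hS0, add_zero, Complex.one_cpow, one_mul]
  have hz' : S z * (1 + z) ^ (-(α:ℂ)) = 1 := by
    have := hconst
    rw [hh0] at this
    exact this
  have hcancel : (1 + z) ^ (-(α:ℂ)) * (1 + z) ^ (α:ℂ) = 1 := by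
    rw [← Complex.cpow_add _ _ (hne z hzρ), neg_add_cancel, Complex.cpow_zero]
  calc S z = S z * ((1 + z) ^ (-(α:ℂ)) * (1 + z) ^ (α:ℂ)) := by rw [hcancel, mul_one]
    _ = (S z * (1 + z) ^ (-(α:ℂ))) * (1 + z) ^ (α:ℂ) := by ring
    _ = (1 + z) ^ (α:ℂ) := by rw [hz', one_mul]

lemma polar_decomp {θ : ℝ} (hθ0 : 0 < θ) (hθπ : θ ≤ π) :
    (1 : ℂ) - Complex.exp (θ * Complex.I)
      = ((2 * Real.sin (θ/2) : ℝ) : ℂ) * Complex.exp ((((θ - π)/2 : ℝ) : ℂ) * Complex.I) := by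
  rw [Complex.exp_mul_I, Complex.exp_mul_I]
  apply Complex.ext <;>
    simp only [Complex.sub_re, Complex.sub_im, Complex.one_re, Complex.one_im,
      Complex.add_re, Complex.add_im, Complex.mul_re, Complex.mul_im,
      Complex.ofReal_re, Complex.ofReal_im, Complex.I_re, Complex.I_im,
      Complex.cos_ofReal_re, Complex.cos_ofReal_im, Complex.sin_ofReal_re,
      Complex.sin_ofReal_im]
  · have h1 : Real.cos θ = 1 - 2 * Real.sin (θ/2)^2 := by
      have hc : Real.cos (2*(θ/2)) = 2*Real.cos (θ/2)^2 - 1 := Real.cos_two_mul _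
      have h2 := Real.sin_sq_add_cos_sq (θ/2)
      rw [show 2*(θ/2) = θ by ring] at hc
      nlinarith
    have h3 : Real.cos ((θ - π)/2) = Real.sin (θ/2) := by
      rw [show (θ - π)/2 = θ/2 - π/2 by ring, Real.cos_sub_pi_div_two]
    rw [h3]
    nlinarith [h1]
  · have h4 : Real.sin ((θ - π)/2) = -Real.cos (θ/2) := by
      rw [show (θ - π)/2 = θ/2 - π/2 by ring, Real.sin_sub_pi_div_two]
    have h5 : Real.sin θ = 2 * Real.sin (θ/2) * Real.cos (θ/2) := by
      rw [show θ = 2 * (θ/2) by ring, Real.sin_two_mul]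
      ring_nf
    rw [h4]
    nlinarith [h5]

lemma cpow_polar {α θ : ℝ} (h0 : 0 < α) (hθ0 : 0 < θ) (hθπ : θ ≤ π) :
    ((1 : ℂ) - Complex.exp (θ * Complex.I)) ^ (α : ℂ)
      = (((2:ℝ) ^ α * Real.sin (θ/2) ^ α : ℝ) : ℂ)
        * Complex.exp (((α * (θ - π) / 2 : ℝ) : ℂ) * Complex.I) := by
  have hsin : 0 < Real.sin (θ/2) :=
    Real.sin_pos_of_pos_of_lt_pi (by linarith) (by linarith [Real.pi_pos])
  set t : ℝ := 2 * Real.sin (θ/2) with ht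
  have htpos : 0 < t := by positivity
  set φ : ℝ := (θ - π)/2 with hφ
  have hφmem : φ ∈ Set.Ioc (-π) π := by
    constructor
    · rw [hφ]; linarith [Real.pi_pos]
    · rw [hφ]; linarith [Real.pi_pos]
  set x : ℂ := (t : ℂ) * Complex.exp ((φ : ℂ) * Complex.I) with hx
  have hxne : x ≠ 0 := by
    apply mul_ne_zero
    · exact_mod_cast htpos.ne'
    · exact Complex.exp_ne_zero _
  have habs : ‖x‖ = t := by
    rw [hx, norm_mul, Complex.norm_real, Real.norm_eq_abs, Complex.norm_exp_ofReal_mul_I,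
      abs_of_pos htpos, mul_one]
  have harg : Complex.arg x = φ := by
    rw [hx, Complex.arg_real_mul _ htpos, Complex.exp_mul_I]
    exact_mod_cast Complex.arg_cos_add_sin_mul_I hφmem
  have hlog : Complex.log x = ((Real.log t : ℝ) : ℂ) + (φ : ℂ) * Complex.I := by
    rw [Complex.log, habs, harg]
  rw [polar_decomp hθ0 hθπ, ← ht, ← hφ, ← hx, Complex.cpow_def_of_ne_zero hxne, hlog]
  rw [add_mul, Complex.exp_add]
  congr 1
  · rw [← Complex.ofReal_mul, ← Complex.ofReal_exp]
    congr 1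
    rw [← Real.rpow_def_of_pos htpos]
    rw [ht, Real.mul_rpow (by norm_num) hsin.le]
  · congr 1
    have he : (α * (θ - π) / 2 : ℝ) = φ * α := by rw [hφ]; ring
    rw [he]
    push_cast
    ring


/-- For `0 < α < 1` and `0 < θ ≤ π`, the series `∑_{k=0}^∞ (−1)^k C(α,k) sin(kθ)`
converges absolutely to `2^α · sin^α(θ/2) · sin(α(θ − π)/2)`. -/
theorem alternating_binom_sin_series
    (α θ : ℝ) (h0 : 0 < α) (h1 : α < 1) (hθ0 : 0 < θ) (hθπ : θ ≤ π) :
    (Summable fun k : ℕ => |(-1 : ℝ) ^ k * genBinom α k * Real.sin (k * θ)|) ∧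
    ∑' k : ℕ, (-1 : ℝ) ^ k * genBinom α k * Real.sin (k * θ)
      = (2 : ℝ) ^ α * Real.sin (θ / 2) ^ α * Real.sin (α * (θ - π) / 2) := by
  have hterm_le : ∀ k : ℕ, |(-1 : ℝ) ^ k * genBinom α k * Real.sin (k * θ)| ≤ |genBinom α k| := by
    intro k
    rw [abs_mul, abs_mul, abs_pow, abs_neg, abs_one, one_pow, one_mul]
    exact mul_le_of_le_one_right (abs_nonneg _) (Real.abs_sin_le_one _)
  have hsummable : Summable fun k : ℕ => |(-1 : ℝ) ^ k * genBinom α k * Real.sin (k * θ)| :=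
    Summable.of_nonneg_of_le (fun k => abs_nonneg _) hterm_le (genBinom_summable h0 h1)
  refine ⟨hsummable, ?_⟩
  set e : ℂ := Complex.exp ((θ : ℂ) * Complex.I) with he
  have habse : ‖e‖ = 1 := Complex.norm_exp_ofReal_mul_I θ
  have hnorme : ‖e‖ = 1 := by rw [habse]
  -- the boundary series
  have hsumc : Summable fun k : ℕ => (genBinom α k : ℂ) * (-e) ^ k := by
    apply Summable.of_norm_bounded (genBinom_summable h0 h1)
    intro k
    simp [norm_mul, norm_pow, norm_neg, hnorme, Complex.norm_real, Real.norm_eq_abs]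
  -- identity inside the disc, applied to -r e
  have key : ∀ r : ℝ, r ∈ Set.Ioo (0:ℝ) 1 →
      ∑' k : ℕ, (genBinom α k : ℂ) * (-((r:ℂ) * e)) ^ k = (1 - (r:ℂ) * e) ^ (α : ℂ) := by
    intro r hr
    have hnorm : ‖-((r:ℂ) * e)‖ < 1 := by
      rw [norm_neg, norm_mul, Complex.norm_real, Real.norm_eq_abs,
        abs_of_pos hr.1, hnorme, mul_one]
      exact hr.2
    have := binomial_series h0 h1 hnorm
    rwa [show (1 : ℂ) + -((r:ℂ) * e) = 1 - (r:ℂ) * e by ring] at this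
  -- limit r → 1⁻
  set l : Filter ℝ := nhdsWithin (1:ℝ) (Set.Iio 1) with hl
  have hIoo : Set.Ioo (0:ℝ) 1 ∈ l := Ioo_mem_nhdsLT (by norm_num)
  have T1 : Filter.Tendsto (fun r : ℝ => ∑' k : ℕ, (genBinom α k : ℂ) * (-((r:ℂ) * e)) ^ k)
      l (nhds (∑' k : ℕ, (genBinom α k : ℂ) * (-e) ^ k)) := by
    apply tendsto_tsum_of_dominated_convergence (bound := fun k => |genBinom α k|)
      (genBinom_summable h0 h1)
    · intro k
      have hc : Continuous fun r : ℝ => (genBinom α k : ℂ) * (-((r:ℂ) * e)) ^ k := by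
        continuity
      have ht : Filter.Tendsto (fun r : ℝ => (genBinom α k : ℂ) * (-((r:ℂ) * e)) ^ k) l
          (nhds ((genBinom α k : ℂ) * (-(((1:ℝ):ℂ) * e)) ^ k)) :=
        (hc.tendsto 1).mono_left nhdsWithin_le_nhds
      simpa using ht
    · filter_upwards [hIoo] with r hr
      intro k
      have hnn : ‖(genBinom α k : ℂ) * (-((r:ℂ) * e)) ^ k‖ = |genBinom α k| * |r| ^ k := by
        simp [norm_mul, norm_pow, hnorme, Complex.norm_real, Real.norm_eq_abs]
      rw [hnn]
      refine mul_le_of_le_one_right (abs_nonneg _) (pow_le_one₀ (abs_nonneg r) ?_)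
      rw [abs_of_pos hr.1]
      exact hr.2.le
  have hre : 0 < ((1:ℂ) - e).re := by
    have hsin : 0 < Real.sin (θ/2) :=
      Real.sin_pos_of_pos_of_lt_pi (by linarith) (by linarith [Real.pi_pos])
    have h1c : Real.cos θ = 1 - 2 * Real.sin (θ/2)^2 := by
      have hc : Real.cos (2*(θ/2)) = 2*Real.cos (θ/2)^2 - 1 := Real.cos_two_mul _
      have h2 := Real.sin_sq_add_cos_sq (θ/2)
      rw [show 2*(θ/2) = θ by ring] at hc
      nlinarith
    have : ((1:ℂ) - e).re = 1 - Real.cos θ := by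
      rw [he, Complex.exp_mul_I]
      simp [Complex.cos_ofReal_re]
    rw [this, h1c]
    nlinarith
  have T2 : Filter.Tendsto (fun r : ℝ => (1 - (r:ℂ) * e) ^ (α : ℂ))
      l (nhds (((1:ℂ) - e) ^ (α : ℂ))) := by
    have hbase : Filter.Tendsto (fun r : ℝ => (1:ℂ) - (r:ℂ) * e) l (nhds ((1:ℂ) - e)) := by
      have hc : Continuous fun r : ℝ => (1:ℂ) - (r:ℂ) * e := by continuity
      have ht : Filter.Tendsto (fun r : ℝ => (1:ℂ) - (r:ℂ) * e) l
          (nhds ((1:ℂ) - ((1:ℝ):ℂ) * e)) := (hc.tendsto 1).mono_left nhdsWithin_le_nhds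
      simpa using ht
    have hcont : ContinuousAt (fun z : ℂ => z ^ (α:ℂ)) ((1:ℂ) - e) :=
      continuousAt_cpow_const (Complex.mem_slitPlane_iff.2 (Or.inl hre))
    exact hcont.tendsto.comp hbase
  have hmain : ∑' k : ℕ, (genBinom α k : ℂ) * (-e) ^ k = ((1:ℂ) - e) ^ (α : ℂ) := by
    have T1' : Filter.Tendsto (fun r : ℝ => (1 - (r:ℂ) * e) ^ (α : ℂ))
        l (nhds (∑' k : ℕ, (genBinom α k : ℂ) * (-e) ^ k)) := by
      apply T1.congr'
      filter_upwards [hIoo] with r hr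
      exact key r hr
    exact tendsto_nhds_unique T1' T2
  -- take imaginary parts
  have him : (∑' k : ℕ, (genBinom α k : ℂ) * (-e) ^ k).im
      = ∑' k : ℕ, ((genBinom α k : ℂ) * (-e) ^ k).im := by
    exact ((hsumc.hasSum.mapL Complex.imCLM).tsum_eq).symm
  have hterm : ∀ k : ℕ, ((genBinom α k : ℂ) * (-e) ^ k).im
      = (-1 : ℝ) ^ k * genBinom α k * Real.sin (k * θ) := by
    intro k
    have hek : (-e) ^ k = ((((-1:ℝ)) ^ k : ℝ) : ℂ) * Complex.exp (((k * θ : ℝ) : ℂ) * Complex.I) := by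
      rw [neg_pow, he, ← Complex.exp_nat_mul]
      push_cast
      ring_nf
    rw [hek]
    have heq : (genBinom α k : ℂ) * ((((-1:ℝ)) ^ k : ℝ) : ℂ) * Complex.exp (((k * θ : ℝ) : ℂ) * Complex.I)
        = (((genBinom α k * ((-1:ℝ)) ^ k : ℝ)) : ℂ) * Complex.exp (((k * θ : ℝ) : ℂ) * Complex.I) := by
      push_cast; ring
    rw [← mul_assoc, heq, Complex.im_ofReal_mul, Complex.exp_ofReal_mul_I_im]
    ring
  have hrhs : (((1:ℂ) - e) ^ (α : ℂ)).im
      = (2 : ℝ) ^ α * Real.sin (θ / 2) ^ α * Real.sin (α * (θ - π) / 2) := by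
    rw [he, cpow_polar h0 hθ0 hθπ, Complex.im_ofReal_mul, Complex.exp_ofReal_mul_I_im]
  calc ∑' k : ℕ, (-1 : ℝ) ^ k * genBinom α k * Real.sin (k * θ)
      = ∑' k : ℕ, ((genBinom α k : ℂ) * (-e) ^ k).im := by
        apply tsum_congr
        intro k
        rw [hterm k]
    _ = (∑' k : ℕ, (genBinom α k : ℂ) * (-e) ^ k).im := him.symm
    _ = (((1:ℂ) - e) ^ (α : ℂ)).im := by rw [hmain]
    _ = (2 : ℝ) ^ α * Real.sin (θ / 2) ^ α * Real.sin (α * (θ - π) / 2) := hrhs
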